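/- Let g be an isometry of a metric space X, monotone in the sense that n ↦ d(x0, gⁿx0) tends to infinity monotonically for large n, and suppose τ(g) = 0. Then there exists a metric functional h of the orbit Y = {gⁿx0 : n ∈ ℤ} (with the induced metric) that vanishes on the entire orbit: h(gⁿx0) = 0 for all n ∈ ℤ. -/

import Mathlib

def metricFunctionals (X : Type*) [MetricSpace X] (x0 : X) : Set (X → ℝ) :=
  closure (Set.range fun x : X => fun y : X => dist y x - dist x0 x)

private def isomPermHom (X : Type*) [MetricSpace X] : (X ≃ᵢ X) →* Equiv.Perm X :=
  MonoidHom.mk' (fun e => e.toEquiv) (fun _ _ => rfl)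

theorem stmt_17 (X : Type*) [MetricSpace X] (x0 : X)
    (g : X ≃ᵢ X)
    (hmono : ∃ N : ℕ, ∀ n : ℕ, N ≤ n →
      dist x0 ((g.toEquiv ^ (n : ℤ)) x0) ≤ dist x0 ((g.toEquiv ^ ((n : ℤ) + 1)) x0))
    (hunbdd : Filter.Tendsto (fun n : ℕ => dist x0 ((g.toEquiv ^ (n : ℤ)) x0))
      Filter.atTop Filter.atTop)
    (hτ : Filter.Tendsto (fun n : ℕ => dist x0 ((g.toEquiv ^ (n : ℤ)) x0) / n)
      Filter.atTop (nhds 0)) :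
    ∃ h ∈ metricFunctionals (Set.range fun n : ℤ => (g.toEquiv ^ n) x0)
        (⟨x0, ⟨0, by simp⟩⟩ :
          Set.range fun n : ℤ => (g.toEquiv ^ n) x0),
      ∀ n : ℤ, h ⟨(g.toEquiv ^ n) x0, ⟨n, rfl⟩⟩ = 0 := by
  obtain ⟨N, hN⟩ := hmono
  have hGE : ∀ m : ℤ, g.toEquiv ^ m = (g ^ m).toEquiv :=
    fun m => (map_zpow (isomPermHom X) g m).symm
  set A : ℤ → ℝ := fun m => dist x0 ((g ^ m).toEquiv x0) with hA
  -- distance on the orbit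
  have hdist : ∀ m n : ℤ, dist ((g ^ m).toEquiv x0) ((g ^ n).toEquiv x0) = A (n - m) := by
    intro m n
    have hco : (g ^ n).toEquiv x0 = (g ^ m).toEquiv ((g ^ (n - m)).toEquiv x0) := by
      have h1 : g ^ m * g ^ (n - m) = g ^ n := by rw [← zpow_add]; ring_nf
      rw [← h1]; rfl
    rw [hco]
    have := (g ^ m).isometry.dist_eq x0 ((g ^ (n - m)).toEquiv x0)
    simpa [hA] using this
  -- monotonicity
  have step : ∀ j : ℤ, (N : ℤ) ≤ j → A j ≤ A (j + 1) := by
    intro j hj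
    lift j to ℕ using le_trans (Int.ofNat_nonneg N) hj
    have := hN j (by exact_mod_cast hj)
    simpa [hA, hGE] using this
  have hmonoN : ∀ i : ℤ, (N : ℤ) ≤ i → ∀ t : ℕ, A i ≤ A (i + t) := by
    intro i hi t
    induction t with
    | zero => simp
    | succ t ih =>
      have hstep := step (i + t) (by omega)
      have he : i + ((t : ℤ) + 1) = i + t + 1 := by ring
      push_cast
      rw [he]
      calc A i ≤ A (i + t) := by push_cast at ih; exact ih
        _ ≤ A (i + t + 1) := hstep
  have hmonoZ : ∀ i j : ℤ, (N : ℤ) ≤ i → i ≤ j → A i ≤ A j := by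
    intro i j hi hij
    have := hmonoN i hi (j - i).toNat
    rwa [show i + (((j - i).toNat : ℕ) : ℤ) = j by omega] at this
  -- τ(g) = 0 in terms of A
  have hτ' : Filter.Tendsto (fun n : ℕ => A n / n) Filter.atTop (nhds 0) := by
    simp only [hGE] at hτ; exact hτ
  -- key window lemma
  have key : ∀ (M : ℕ) (ε : ℝ), 0 < ε →
      ∃ n : ℕ, (N : ℤ) + M ≤ (n : ℤ) ∧ A ((n : ℤ) + M) - A ((n : ℤ) - M) < ε := by
    intro M ε hε
    by_contra hcon
    push_neg at hcon
    rcases Nat.eq_zero_or_pos M with hM | hM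
    · subst hM
      have := hcon N (by simp)
      simp at this
      linarith
    have hM1 : (1 : ℝ) ≤ (M : ℝ) := by exact_mod_cast hM
    have claim : ∀ k : ℕ, A N + k * ε ≤ A ((N : ℤ) + 2 * M * k) := by
      intro k
      induction k with
      | zero => simp
      | succ k ih =>
        have h1 := hcon (N + 2 * M * k + M)
          (by exact_mod_cast (by omega : N + M ≤ N + 2 * M * k + M))
        have e1 : ((N + 2 * M * k + M : ℕ) : ℤ) + (M : ℤ) = (N : ℤ) + 2 * M * (k + 1) := by
          push_cast; ring
        have e2 : ((N + 2 * M * k + M : ℕ) : ℤ) - (M : ℤ) = (N : ℤ) + 2 * M * k := by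
          push_cast; ring
        rw [e1, e2] at h1
        push_cast
        push_cast at ih
        linarith
    set φ : ℕ → ℕ := fun k => N + 2 * M * k with hφ
    have hφtop : Filter.Tendsto φ Filter.atTop Filter.atTop := by
      apply Filter.tendsto_atTop_mono (f := fun k : ℕ => k) _ Filter.tendsto_id
      intro k; simp only [hφ]; nlinarith [hM]
    have h0 : Filter.Tendsto (fun k : ℕ => A (φ k) / (φ k : ℝ)) Filter.atTop (nhds 0) :=
      hτ'.comp hφtop
    have hle : ∀ k : ℕ, 1 ≤ k → (A N + k * ε) / (φ k : ℝ) ≤ A (φ k) / (φ k : ℝ) := by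
      intro k hk
      have hpos : (0 : ℝ) < (φ k : ℝ) := by
        have : 0 < φ k := by simp only [hφ]; positivity
        exact_mod_cast this
      have hidx : ((φ k : ℕ) : ℤ) = (N : ℤ) + 2 * M * k := by
        simp only [hφ]; push_cast; ring
      have hcl := claim k
      rw [← hidx] at hcl
      exact div_le_div_of_nonneg_right hcl hpos.le
    -- limit of lower bound is ε / (2M) > 0
    have hMne : (2 * (M : ℝ)) ≠ 0 := by positivity
    have hLlim : Filter.Tendsto (fun k : ℕ => (A N + k * ε) / (φ k : ℝ)) Filter.atTop
        (nhds (ε / (2 * M))) := by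
      have heq : (fun k : ℕ => (A N + k * ε) / (φ k : ℝ))
          =ᶠ[Filter.atTop] (fun k : ℕ => (A N / k + ε) / ((N : ℝ) / k + 2 * M)) := by
        filter_upwards [Filter.eventually_ge_atTop 1] with k hk
        have hk0 : (k : ℝ) ≠ 0 := by
          have : 0 < k := hk
          positivity
        have hd : (φ k : ℝ) = (N : ℝ) + 2 * M * k := by
          simp only [hφ]; push_cast; ring
        rw [hd]
        have hden : (N : ℝ) + 2 * M * k ≠ 0 := by positivity
        have hden2 : (N : ℝ) / k + 2 * M ≠ 0 := by positivity
        rw [div_eq_div_iff hden hden2]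
        field_simp
        try tauto
      refine Filter.Tendsto.congr' heq.symm ?_
      have h1 : Filter.Tendsto (fun k : ℕ => A N / k + ε) Filter.atTop (nhds (0 + ε)) :=
        (tendsto_const_div_atTop_nhds_zero_nat (A N)).add tendsto_const_nhds
      have h2 : Filter.Tendsto (fun k : ℕ => (N : ℝ) / k + 2 * M) Filter.atTop
          (nhds (0 + 2 * M)) :=
        (tendsto_const_div_atTop_nhds_zero_nat (N : ℝ)).add tendsto_const_nhds
      rw [zero_add] at h1 h2
      exact h1.div h2 hMne
    have : ε / (2 * M) ≤ 0 := by
      refine le_of_tendsto_of_tendsto hLlim h0 ?_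
      filter_upwards [Filter.eventually_ge_atTop 1] with k hk using hle k hk
    have : 0 < ε / (2 * M) := by positivity
    linarith
  -- choose the subsequence
  have hk : ∀ k : ℕ, ∃ n : ℕ, (N : ℤ) + k ≤ (n : ℤ) ∧
      A ((n : ℤ) + k) - A ((n : ℤ) - k) < 1 / (k + 1) := by
    intro k
    exact key k (1 / (k + 1)) (by positivity)
  choose z hz1 hz2 using hk
  -- the zero functional works
  set Y := Set.range fun n : ℤ => (g.toEquiv ^ n) x0 with hY
  refine ⟨fun _ => 0, ?_, fun n => rfl⟩
  unfold metricFunctionals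
  set x0' : Y := (⟨x0, ⟨0, by simp⟩⟩ : Y) with hx0'
  set pt : ℕ → Y := fun k => ⟨(g.toEquiv ^ (z k : ℤ)) x0, ⟨(z k : ℤ), rfl⟩⟩ with hpt
  refine mem_closure_of_tendsto (b := Filter.atTop)
    (f := fun k : ℕ => fun y : Y => dist y (pt k) - dist x0' (pt k))
    ?_ (Filter.Eventually.of_forall fun k => ⟨pt k, rfl⟩)
  rw [tendsto_pi_nhds]
  intro y
  obtain ⟨m, hm⟩ := y.2
  have hval : ∀ k : ℕ, dist y (pt k) - dist x0' (pt k)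
      = A ((z k : ℤ) - m) - A (z k) := by
    intro k
    have hm' : (g.toEquiv ^ m) x0 = (y : X) := hm
    simp only [Subtype.dist_eq, hpt, hx0']
    rw [← hm', hGE m, hGE ((z k : ℕ) : ℤ), hdist m (z k)]
  have hgoal : Filter.Tendsto (fun k : ℕ => A ((z k : ℤ) - m) - A (z k)) Filter.atTop (nhds 0) := by
    refine squeeze_zero_norm' ?_ tendsto_one_div_add_atTop_nhds_zero_nat
    · filter_upwards [Filter.eventually_ge_atTop m.natAbs] with k hk
      have h1 : m ≤ (k : ℤ) := by omega
      have h2 : -(k : ℤ) ≤ m := by omega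
      have hNk := hz1 k
      have hw := hz2 k
      have hb1 : A ((z k : ℤ) - k) ≤ A ((z k : ℤ) - m) :=
        hmonoZ _ _ (by omega) (by omega)
      have hb2 : A ((z k : ℤ) - m) ≤ A ((z k : ℤ) + k) :=
        hmonoZ _ _ (by omega) (by omega)
      have hb3 : A ((z k : ℤ) - k) ≤ A (z k) :=
        hmonoZ _ _ (by omega) (by omega)
      have hb4 : A (z k) ≤ A ((z k : ℤ) + k) :=
        hmonoZ _ _ (by omega) (by omega)
      rw [Real.norm_eq_abs, abs_le]
      constructor <;> linarith
  exact Filter.Tendsto.congr (fun k => (hval k).symm) hgoal
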